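/- Let G = (V, E) be a finite simple graph with at least one edge, regarded as the Sperner hypergraph B = E of two-element sets. Then G is a unique key graph if and only if for every maximal independent set I ⊆ V of G and every vertex v ∈ I there exists a vertex u ∉ I that is an individual neighbor of v, i.e. N(u) ∩ I = {v}. -/
import Mathlib


open scoped Classical

variable {V : Type*} [Fintype V] [DecidableEq V]

/-- A Sperner hypergraph: no hyperedge contains another one. -/
def SpernerFam (𝓑 : Set (Finset V)) : Prop :=
  ∀ B₁ ∈ 𝓑, ∀ B₂ ∈ 𝓑, B₁ ⊆ B₂ → B₁ = B₂

/-- `T` is a transversal of `𝓑` if it meets every hyperedge. -/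
def IsTransversal (𝓑 : Set (Finset V)) (T : Finset V) : Prop :=
  ∀ B ∈ 𝓑, (T ∩ B).Nonempty

/-- `𝓑^d`: the family of inclusion-minimal transversals of `𝓑`. -/
def dualHyp (𝓑 : Set (Finset V)) : Set (Finset V) :=
  {T | IsTransversal 𝓑 T ∧ ∀ T', IsTransversal 𝓑 T' → T' ⊆ T → T' = T}

/-- A Boolean function `h` on `V` is pure Horn if its set of true assignments contains the
all-true assignment and is closed under componentwise AND. -/
def PureHorn (h : (V → Bool) → Bool) : Prop :=
  h (fun _ => true) = true ∧
  ∀ x y : V → Bool, h x = true → h y = true → h (fun v => x v && y v) = true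

/-- The clause `A → v` is an implicate of `h`: every true assignment of `h` that is true on
every element of `A` is also true at `v`. -/
def Implicate (h : (V → Bool) → Bool) (A : Finset V) (v : V) : Prop :=
  ∀ x : V → Bool, h x = true → (∀ a ∈ A, x a = true) → x v = true

/-- `K` is a key of `h` if `K → v` is an implicate of `h` for every `v ∈ V \ K`. -/
def IsKey (h : (V → Bool) → Bool) (K : Finset V) : Prop :=
  ∀ v ∉ K, Implicate h K v

/-- `𝒦(h)`: the family of inclusion-minimal keys of `h`. -/
def minKeys (h : (V → Bool) → Bool) : Set (Finset V) :=
  {K | IsKey h K ∧ ∀ K', IsKey h K' → K' ⊆ K → K' = K}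

/-- `Φ_𝓑`: the pure Horn function whose true assignments are exactly those `x` such that for
every `B ∈ 𝓑` on which `x` is identically true, `x` is identically true on all of `V`. -/
noncomputable def PhiB (𝓑 : Set (Finset V)) : (V → Bool) → Bool :=
  fun x => decide (∀ B ∈ 𝓑, (∀ u ∈ B, x u = true) → ∀ v : V, x v = true)

/-- `𝓑` is a unique key hypergraph: `Φ_𝓑` is the unique pure Horn function `h`
with `𝒦(h) = 𝓑`. -/
def UniqueKeyHypergraph (𝓑 : Set (Finset V)) : Prop :=
  minKeys (PhiB 𝓑) = 𝓑 ∧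
  ∀ h : (V → Bool) → Bool, PureHorn h → minKeys h = 𝓑 → h = PhiB 𝓑

/-- The edge set of a simple graph viewed as a hypergraph of two-element sets. -/
def edgeFam (G : SimpleGraph V) : Set (Finset V) :=
  {e | ∃ u v : V, G.Adj u v ∧ e = {u, v}}

/-- `I` is a maximal independent set of the graph `G`. -/
def MaximalIndepSet (G : SimpleGraph V) (I : Finset V) : Prop :=
  (∀ u ∈ I, ∀ v ∈ I, ¬ G.Adj u v) ∧
  ∀ I' : Finset V, (∀ u ∈ I', ∀ v ∈ I', ¬ G.Adj u v) → I ⊆ I' → I' = I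


section aux

variable {V : Type*} [Fintype V] [DecidableEq V]

noncomputable def chiF (S : Finset V) : V → Bool := fun v => decide (v ∈ S)

lemma chiF_eq_true {S : Finset V} {v : V} : chiF S v = true ↔ v ∈ S := by
  simp [chiF]

lemma phiB_true_iff (𝓑 : Set (Finset V)) (x : V → Bool) :
    PhiB 𝓑 x = true ↔ ∀ B ∈ 𝓑, (∀ u ∈ B, x u = true) → ∀ v : V, x v = true := by
  simp [PhiB]

lemma exists_maximal_indep (G : SimpleGraph V) (S : Finset V)
    (hS : ∀ u ∈ S, ∀ v ∈ S, ¬ G.Adj u v) :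
    ∃ I : Finset V, MaximalIndepSet G I ∧ S ⊆ I := by
  classical
  set s : Finset (Finset V) :=
    Finset.univ.filter (fun T => (∀ u ∈ T, ∀ v ∈ T, ¬ G.Adj u v) ∧ S ⊆ T) with hs
  have hSs : S ∈ s := Finset.mem_filter.mpr ⟨Finset.mem_univ _, hS, subset_rfl⟩
  obtain ⟨I, hIs, hmax⟩ := Finset.exists_max_image s Finset.card ⟨S, hSs⟩
  rw [hs, Finset.mem_filter] at hIs
  refine ⟨I, ⟨hIs.2.1, ?_⟩, hIs.2.2⟩
  intro I' hI' hsub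
  have hI's : I' ∈ s :=
    Finset.mem_filter.mpr ⟨Finset.mem_univ _, hI', hIs.2.2.trans hsub⟩
  exact (Finset.eq_of_subset_of_card_le hsub (hmax I' hI's)).symm

lemma exists_minKey {h : (V → Bool) → Bool} {K : Finset V} (hK : IsKey h K) :
    ∃ K' ∈ minKeys h, K' ⊆ K := by
  classical
  set s : Finset (Finset V) := Finset.univ.filter (fun T => IsKey h T ∧ T ⊆ K) with hs
  have hKs : K ∈ s := Finset.mem_filter.mpr ⟨Finset.mem_univ _, hK, subset_rfl⟩
  obtain ⟨m, hms, hminc⟩ := Finset.exists_min_image s Finset.card ⟨K, hKs⟩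
  rw [hs, Finset.mem_filter] at hms
  refine ⟨m, ⟨hms.2.1, ?_⟩, hms.2.2⟩
  intro K'' hK'' hsub
  have h2 : K'' ∈ s :=
    Finset.mem_filter.mpr ⟨Finset.mem_univ _, hK'', hsub.trans hms.2.2⟩
  exact Finset.eq_of_subset_of_card_le hsub (hminc K'' h2)

lemma minKeys_eq_edgeFam (G : SimpleGraph V) {h : (V → Bool) → Bool}
    (hkeys : ∀ K : Finset V, IsKey h K ↔ ∃ e ∈ edgeFam G, e ⊆ K) :
    minKeys h = edgeFam G := by
  ext K
  constructor
  · rintro ⟨hK, hmin⟩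
    obtain ⟨e, he, hsub⟩ := (hkeys K).mp hK
    have hKe : IsKey h e := (hkeys e).mpr ⟨e, he, subset_rfl⟩
    rwa [← hmin e hKe hsub]
  · intro he
    refine ⟨(hkeys K).mpr ⟨K, he, subset_rfl⟩, ?_⟩
    intro K' hK' hsub
    obtain ⟨e', he', hsub'⟩ := (hkeys K').mp hK'
    obtain ⟨u, v, huv, rfl⟩ := he
    obtain ⟨a, b, hab, rfl⟩ := he'
    have hcard : ({u, v} : Finset V).card ≤ ({a, b} : Finset V).card := by
      rw [Finset.card_pair huv.ne, Finset.card_pair hab.ne]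
    have heq : ({a, b} : Finset V) = {u, v} :=
      Finset.eq_of_subset_of_card_le (hsub'.trans hsub) hcard
    exact Finset.Subset.antisymm hsub (heq ▸ hsub')

lemma phi_isKey_iff (G : SimpleGraph V) (hE : (edgeFam G).Nonempty) (K : Finset V) :
    IsKey (PhiB (edgeFam G)) K ↔ ∃ e ∈ edgeFam G, e ⊆ K := by
  constructor
  · intro hK
    by_contra hno
    push_neg at hno
    have htrue : PhiB (edgeFam G) (chiF K) = true := by
      rw [phiB_true_iff]
      intro B hB hBK
      exact absurd (fun u hu => chiF_eq_true.mp (hBK u hu)) (hno B hB)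
    obtain ⟨e, he⟩ := hE
    obtain ⟨a, b, hab, rfl⟩ := he
    have hnsub : ¬ ({a, b} : Finset V) ⊆ K := hno _ ⟨a, b, hab, rfl⟩
    have hw : ∃ w, w ∉ K := by
      by_cases ha : a ∈ K
      · refine ⟨b, fun hb => hnsub ?_⟩
        intro z hz
        rcases Finset.mem_insert.mp hz with rfl | hz
        · exact ha
        · rwa [Finset.mem_singleton.mp hz]
      · exact ⟨a, ha⟩
    obtain ⟨w, hwK⟩ := hw
    have := hK w hwK (chiF K) htrue (fun a ha => chiF_eq_true.mpr ha)
    exact hwK (chiF_eq_true.mp this)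
  · rintro ⟨e, he, hsub⟩ v hv x hx hxK
    exact (phiB_true_iff _ _).mp hx e he (fun u hu => hxK u (hsub hu)) v

lemma horn_meet {h : (V → Bool) → Bool} (hh : PureHorn h) (F : Finset (Finset V))
    (ht : ∀ I ∈ F, h (chiF I) = true) :
    h (fun v => decide (∀ I ∈ F, v ∈ I)) = true := by
  classical
  induction F using Finset.cons_induction with
  | empty =>
      have heq : (fun v => decide (∀ I ∈ (∅ : Finset (Finset V)), v ∈ I))
          = fun _ : V => true := by
        funext v; simp
      rw [heq]; exact hh.1
  | cons a s ha ih =>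
      have hxy := hh.2 (chiF a) (fun v => decide (∀ I ∈ s, v ∈ I))
        (ht a (Finset.mem_cons_self a s))
        (ih fun I hI => ht I (Finset.mem_cons.mpr (Or.inr hI)))
      have heq : (fun v => chiF a v && decide (∀ I ∈ s, v ∈ I))
          = fun v => decide (∀ I ∈ Finset.cons a s ha, v ∈ I) := by
        funext v
        simp [chiF, Finset.forall_mem_cons, Bool.decide_and]
      rwa [heq] at hxy

lemma maximal_indep_true {G : SimpleGraph V} {h : (V → Bool) → Bool}
    (hmin : minKeys h = edgeFam G)
    {I : Finset V} (hI : MaximalIndepSet G I) : h (chiF I) = true := by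
  classical
  by_contra hfalse
  have hkey : IsKey h I := by
    intro w hw x hx hxI
    by_cases hind : ∀ a, x a = true → ∀ b, x b = true → ¬ G.Adj a b
    · set T : Finset V := Finset.univ.filter (fun v => x v = true) with hT
      have hIT : I ⊆ T := fun a ha => by
        rw [hT, Finset.mem_filter]; exact ⟨Finset.mem_univ _, hxI a ha⟩
      have hTind : ∀ u ∈ T, ∀ v ∈ T, ¬ G.Adj u v := by
        intro u hu v hv
        rw [hT, Finset.mem_filter] at hu hv
        exact hind u hu.2 v hv.2
      have hTI : T = I := hI.2 T hTind hIT
      have hmemT : ∀ v, v ∈ I ↔ x v = true := by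
        intro v; rw [← hTI, hT, Finset.mem_filter]
        exact ⟨fun h' => h'.2, fun h' => ⟨Finset.mem_univ _, h'⟩⟩
      have hxchi : x = chiF I := by
        funext v
        cases hxv : x v
        · have : v ∉ I := fun hvI => by rw [(hmemT v).mp hvI] at hxv; cases hxv
          simp [chiF, this]
        · simp [chiF, (hmemT v).mpr hxv]
      rw [hxchi] at hx
      exact absurd hx hfalse
    · push_neg at hind
      obtain ⟨a, hxa, b, hxb, hab⟩ := hind
      have hedge : ({a, b} : Finset V) ∈ minKeys h := by
        rw [hmin]; exact ⟨a, b, hab, rfl⟩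
      by_cases hwa : w = a
      · rwa [hwa]
      by_cases hwb : w = b
      · rwa [hwb]
      refine hedge.1 w (by simp [hwa, hwb]) x hx ?_
      intro z hz
      rcases Finset.mem_insert.mp hz with rfl | hz
      · exact hxa
      · rw [Finset.mem_singleton.mp hz]; exact hxb
  obtain ⟨K', hK', hsub⟩ := exists_minKey hkey
  rw [hmin] at hK'
  obtain ⟨u, v, huv, rfl⟩ := hK'
  exact hI.1 u (hsub (by simp)) v (hsub (by simp)) huv

lemma indep_eq_inter {G : SimpleGraph V}
    (hcond : ∀ I : Finset V, MaximalIndepSet G I → ∀ v ∈ I,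
        ∃ u ∉ I, G.Adj u v ∧ ∀ w ∈ I, G.Adj u w → w = v)
    {S : Finset V} (hS : ∀ u ∈ S, ∀ v ∈ S, ¬ G.Adj u v) (w : V)
    (hw : ∀ I : Finset V, MaximalIndepSet G I → S ⊆ I → w ∈ I) : w ∈ S := by
  classical
  by_contra hwS
  obtain ⟨I₀, hI₀, hSI₀⟩ := exists_maximal_indep G S hS
  have hwI₀ : w ∈ I₀ := hw I₀ hI₀ hSI₀
  obtain ⟨u, huI₀, huw, hunb⟩ := hcond I₀ hI₀ w hwI₀
  set I' : Finset V := insert u (I₀.erase w) with hI'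
  have hI'ind : ∀ a ∈ I', ∀ b ∈ I', ¬ G.Adj a b := by
    intro a ha b hb hab
    rw [hI', Finset.mem_insert, Finset.mem_erase] at ha hb
    rcases ha with rfl | ⟨haw, haI⟩
    · rcases hb with rfl | ⟨hbw, hbI⟩
      · exact G.irrefl hab
      · exact hbw (hunb b hbI hab)
    · rcases hb with rfl | ⟨hbw, hbI⟩
      · exact haw (hunb a haI hab.symm)
      · exact hI₀.1 a haI b hbI hab
  obtain ⟨I'', hI'', hI'I''⟩ := exists_maximal_indep G I' hI'ind
  have hSI'' : S ⊆ I'' := by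
    intro z hz
    apply hI'I''
    rw [hI', Finset.mem_insert, Finset.mem_erase]
    exact Or.inr ⟨fun h => hwS (h ▸ hz), hSI₀ hz⟩
  have hwI'' : w ∈ I'' := hw I'' hI'' hSI''
  have huI'' : u ∈ I'' := hI'I'' (by rw [hI']; exact Finset.mem_insert_self _ _)
  exact hI''.1 u huI'' w hwI'' huw

noncomputable def hFun (G : SimpleGraph V) : (V → Bool) → Bool :=
  fun x => decide (∀ w : V,
    (∀ J : Finset V, MaximalIndepSet G J → (∀ z, x z = true → z ∈ J) → w ∈ J) → x w = true)

lemma hFun_true_iff (G : SimpleGraph V) (x : V → Bool) :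
    hFun G x = true ↔ ∀ w : V,
      (∀ J : Finset V, MaximalIndepSet G J → (∀ z, x z = true → z ∈ J) → w ∈ J) →
        x w = true := by
  simp [hFun]

lemma hFun_pureHorn (G : SimpleGraph V) : PureHorn (hFun G) := by
  constructor
  · rw [hFun_true_iff]; intro w _; rfl
  · intro x y hx hy
    rw [hFun_true_iff] at hx hy ⊢
    intro w hw
    have hxw : x w = true := hx w (fun J hJ hsub => hw J hJ (fun z hz =>
      hsub z ((Bool.and_eq_true _ _).mp hz).1))
    have hyw : y w = true := hy w (fun J hJ hsub => hw J hJ (fun z hz =>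
      hsub z ((Bool.and_eq_true _ _).mp hz).2))
    rw [hxw, hyw]; rfl

lemma hFun_isKey_iff (G : SimpleGraph V) (hE : (edgeFam G).Nonempty) (K : Finset V) :
    IsKey (hFun G) K ↔ ∃ e ∈ edgeFam G, e ⊆ K := by
  constructor
  · intro hK
    by_contra hno
    push_neg at hno
    have hKind : ∀ a ∈ K, ∀ b ∈ K, ¬ G.Adj a b := by
      intro a ha b hb hab
      refine hno {a, b} ⟨a, b, hab, rfl⟩ ?_
      intro z hz
      rcases Finset.mem_insert.mp hz with rfl | hz
      · exact ha
      · rwa [Finset.mem_singleton.mp hz]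
    obtain ⟨I₀, hI₀, hKI₀⟩ := exists_maximal_indep G K hKind
    have htrue : hFun G (chiF I₀) = true := by
      rw [hFun_true_iff]
      intro w hw
      exact chiF_eq_true.mpr (hw I₀ hI₀ (fun z hz => chiF_eq_true.mp hz))
    obtain ⟨e, he⟩ := hE
    obtain ⟨a, b, hab, rfl⟩ := he
    have hor : a ∉ I₀ ∨ b ∉ I₀ := by
      by_contra hc; push_neg at hc
      exact hI₀.1 a hc.1 b hc.2 hab
    obtain ⟨w, hwI₀⟩ : ∃ w, w ∉ I₀ := by
      rcases hor with h' | h'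
      exacts [⟨a, h'⟩, ⟨b, h'⟩]
    have hwK : w ∉ K := fun h' => hwI₀ (hKI₀ h')
    have := hK w hwK (chiF I₀) htrue (fun z hz => chiF_eq_true.mpr (hKI₀ hz))
    exact hwI₀ (chiF_eq_true.mp this)
  · rintro ⟨e, he, hsub⟩ v hv x hx hxK
    obtain ⟨a, b, hab, rfl⟩ := he
    rw [hFun_true_iff] at hx
    refine hx v ?_
    intro J hJ hsub'
    have haJ : a ∈ J := hsub' a (hxK a (hsub (by simp)))
    have hbJ : b ∈ J := hsub' b (hxK b (hsub (by simp)))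
    exact absurd hab (hJ.1 a haJ b hbJ)

end aux

/-- A graph with at least one edge is a unique key graph iff for every maximal independent
set `I` and every `v ∈ I` there is a vertex `u ∉ I` that is an individual neighbor of `v`,
i.e. `N(u) ∩ I = {v}`. -/
theorem stmt7 (G : SimpleGraph V) (hE : (edgeFam G).Nonempty) :
    UniqueKeyHypergraph (edgeFam G) ↔
      ∀ I : Finset V, MaximalIndepSet G I → ∀ v ∈ I,
        ∃ u ∉ I, G.Adj u v ∧ ∀ w ∈ I, G.Adj u w → w = v := by
  classical
  constructor
  · intro hUK
    by_contra hcond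
    push_neg at hcond
    obtain ⟨I, hImax, v, hvI, hcond⟩ := hcond
    have hmk : minKeys (hFun G) = edgeFam G := minKeys_eq_edgeFam G (hFun_isKey_iff G hE)
    have heq : hFun G = PhiB (edgeFam G) := hUK.2 (hFun G) (hFun_pureHorn G) hmk
    set S : Finset V := I.erase v with hS
    have hphi : PhiB (edgeFam G) (chiF S) = true := by
      rw [phiB_true_iff]
      intro B hB hBS
      obtain ⟨a, b, hab, rfl⟩ := hB
      have ha : a ∈ I := Finset.mem_of_mem_erase (chiF_eq_true.mp (hBS a (by simp)))
      have hb : b ∈ I := Finset.mem_of_mem_erase (chiF_eq_true.mp (hBS b (by simp)))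
      exact absurd hab (hImax.1 a ha b hb)
    have hhf : ¬ hFun G (chiF S) = true := by
      rw [hFun_true_iff]
      intro hall
      have hv' : chiF S v = true := by
        apply hall v
        intro J hJ hSJ
        by_contra hvJ
        have hins : ∀ a ∈ insert v J, ∀ b ∈ insert v J, ¬ G.Adj a b := by
          intro a ha b hb hab
          rcases Finset.mem_insert.mp ha with rfl | haJ
          · rcases Finset.mem_insert.mp hb with rfl | hbJ
            · exact G.irrefl hab
            · have hbI : b ∉ I := fun h' => hImax.1 a hvI b h' hab
              obtain ⟨w, hwI, hwadj, hwv⟩ := hcond b hbI hab.symm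
              have hwS : w ∈ S := Finset.mem_erase.mpr ⟨hwv, hwI⟩
              have hwJ : w ∈ J := hSJ w (chiF_eq_true.mpr hwS)
              exact hJ.1 b hbJ w hwJ hwadj
          · rcases Finset.mem_insert.mp hb with rfl | hbJ
            · have haI : a ∉ I := fun h' => hImax.1 b hvI a h' hab.symm
              obtain ⟨w, hwI, hwadj, hwv⟩ := hcond a haI hab
              have hwS : w ∈ S := Finset.mem_erase.mpr ⟨hwv, hwI⟩
              have hwJ : w ∈ J := hSJ w (chiF_eq_true.mpr hwS)
              exact hJ.1 a haJ w hwJ hwadj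
            · exact hJ.1 a haJ b hbJ hab
        have hJeq := hJ.2 (insert v J) hins (Finset.subset_insert v J)
        exact hvJ (hJeq ▸ Finset.mem_insert_self v J)
      exact Finset.notMem_erase v I (chiF_eq_true.mp hv')
    rw [heq, hphi] at hhf
    exact hhf rfl
  · intro hcond
    refine ⟨minKeys_eq_edgeFam G (phi_isKey_iff G hE), ?_⟩
    intro h hh hmin
    funext x
    have hiff : h x = true ↔ PhiB (edgeFam G) x = true := by
      constructor
      · intro hx
        rw [phiB_true_iff]
        intro B hB hxB
        obtain ⟨a, b, hab, rfl⟩ := hB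
        have hedge : ({a, b} : Finset V) ∈ minKeys h := by
          rw [hmin]; exact ⟨a, b, hab, rfl⟩
        intro w
        by_cases hwa : w = a
        · exact hwa ▸ hxB a (by simp)
        by_cases hwb : w = b
        · exact hwb ▸ hxB b (by simp)
        exact hedge.1 w (by simp [hwa, hwb]) x hx hxB
      · intro hx
        by_cases hall : ∀ v, x v = true
        · have hx1 : x = fun _ => true := funext hall
          rw [hx1]; exact hh.1
        · push_neg at hall
          set S : Finset V := Finset.univ.filter (fun v => x v = true) with hSdef
          have hmem : ∀ v, v ∈ S ↔ x v = true := by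
            intro v; rw [hSdef, Finset.mem_filter]
            exact ⟨fun h' => h'.2, fun h' => ⟨Finset.mem_univ _, h'⟩⟩
          have hxS : x = chiF S := by
            funext v
            cases hxv : x v
            · have hvS : v ∉ S := fun h' => by
                rw [(hmem v).mp h'] at hxv; cases hxv
              simp [chiF, hvS]
            · simp [chiF, (hmem v).mpr hxv]
          have hSind : ∀ a ∈ S, ∀ b ∈ S, ¬ G.Adj a b := by
            intro a ha b hb hab
            rw [hmem] at ha hb
            have hallv := (phiB_true_iff _ _).mp hx {a, b} ⟨a, b, hab, rfl⟩ (by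
              intro u hu
              rcases Finset.mem_insert.mp hu with rfl | hu
              · exact ha
              · rw [Finset.mem_singleton.mp hu]; exact hb)
            obtain ⟨v₀, hv₀⟩ := hall
            exact hv₀ (hallv v₀)
          set F : Finset (Finset V) :=
            Finset.univ.filter (fun I => MaximalIndepSet G I ∧ S ⊆ I) with hF
          have hchi : (fun v => decide (∀ I ∈ F, v ∈ I)) = chiF S := by
            funext v
            simp only [chiF]
            refine decide_eq_decide.mpr ⟨fun hAll => ?_, fun hvS I hIF => ?_⟩
            · refine indep_eq_inter hcond hSind v ?_
              intro I hI hSI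
              exact hAll I (Finset.mem_filter.mpr ⟨Finset.mem_univ _, hI, hSI⟩)
            · rw [hF, Finset.mem_filter] at hIF
              exact hIF.2.2 hvS
          have hmeet := horn_meet hh F (fun I hI => by
            rw [hF, Finset.mem_filter] at hI
            exact maximal_indep_true hmin hI.2.1)
          rw [hchi] at hmeet
          rwa [hxS]
    cases h1 : h x <;> cases h2 : PhiB (edgeFam G) x <;> simp_all
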